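/- If every finite power X^k (with the product topology) of a space X satisfies S1(Τ,O), then X satisfies S1(Τ,Ω). -/

import Mathlib

open Set Filter Cardinal
open scoped Classical

noncomputable section

/-- The Cantor space `2^ℕ`. -/
abbrev Cantor := ℕ → Bool

/-- Arrays: elements of `2^(ℕ×ℕ)`. -/
abbrev Arr := ℕ × ℕ → Bool

/-- A γ-array: every row is eventually 1. -/
def IsGammaArray (A : Arr) : Prop := ∀ n, ∀ᶠ m in atTop, A (n, m) = true

/-- A γ-family: a set of γ-arrays. -/
def GammaFamily (𝒜 : Set Arr) : Prop := ∀ A ∈ 𝒜, IsGammaArray A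

/-- A family of arrays is finitely τ-diagonalizable. -/
def FinTauDiag (𝒜 : Set Arr) : Prop :=
  ∃ F : ℕ → Finset ℕ,
    (∀ A ∈ 𝒜, ∃ᶠ n in atTop, ∃ m ∈ F n, A (n, m) = true) ∧
    (∀ A ∈ 𝒜, ∀ B ∈ 𝒜,
      (∀ᶠ n in atTop, ∀ m ∈ F n, A (n, m) ≤ B (n, m)) ∨
      (∀ᶠ n in atTop, ∀ m ∈ F n, B (n, m) ≤ A (n, m)))

/-- A family of arrays is semi τ-diagonalizable (via a partial function with domain `D`). -/
def SemiTauDiag (𝒜 : Set Arr) : Prop :=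
  ∃ (D : Set ℕ) (g : ℕ → ℕ),
    (∀ A ∈ 𝒜, ∃ᶠ n in atTop, n ∈ D ∧ A (n, g n) = true) ∧
    (∀ A ∈ 𝒜, ∀ B ∈ 𝒜,
      (∀ᶠ n in atTop, n ∈ D → A (n, g n) ≤ B (n, g n)) ∨
      (∀ᶠ n in atTop, n ∈ D → B (n, g n) ≤ A (n, g n)))

/-- A τ-family of arrays. -/
def TauFamily (𝒜 : Set Arr) : Prop :=
  (∀ A ∈ 𝒜, ∀ n, ∃ᶠ m in atTop, A (n, m) = true) ∧
  (∀ A ∈ 𝒜, ∀ B ∈ 𝒜, ∀ n,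
    (∀ᶠ m in atTop, A (n, m) ≤ B (n, m)) ∨
    (∀ᶠ m in atTop, B (n, m) ≤ A (n, m)))

/-- A family of arrays is τ-diagonalizable. -/
def TauDiag (𝒜 : Set Arr) : Prop :=
  ∃ g : ℕ → ℕ,
    (∀ A ∈ 𝒜, ∃ᶠ n in atTop, A (n, g n) = true) ∧
    (∀ A ∈ 𝒜, ∀ B ∈ 𝒜,
      (∀ᶠ n in atTop, A (n, g n) ≤ B (n, g n)) ∨
      (∀ᶠ n in atTop, B (n, g n) ≤ A (n, g n)))

/-- A family of arrays is o-diagonalizable. -/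
def ODiag (𝒜 : Set Arr) : Prop :=
  ∃ g : ℕ → ℕ, ∀ A ∈ 𝒜, ∃ n, A (n, g n) = true

/-- An ω-family of arrays: rows frequently 1 and, for each `n`,
the family of the `n`-th rows is centered. -/
def OmegaFamily (𝒜 : Set Arr) : Prop :=
  (∀ A ∈ 𝒜, ∀ n, ∃ᶠ m in atTop, A (n, m) = true) ∧
  (∀ n, ∀ 𝒜' ⊆ 𝒜, 𝒜'.Finite → {m | ∀ A ∈ 𝒜', A (n, m) = true}.Infinite)

/-- The bounding number 𝔟. -/
def bNum : Cardinal :=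
  sInf {c | ∃ F : Set (ℕ → ℕ), Cardinal.mk F = c ∧
    ¬ ∃ g : ℕ → ℕ, ∀ f ∈ F, ∀ᶠ n in atTop, f n ≤ g n}

/-- The splitting number 𝔰. -/
def sNum : Cardinal :=
  sInf {c | ∃ S : Set (Set ℕ), Cardinal.mk S = c ∧ (∀ s ∈ S, s.Infinite) ∧
    ∀ a : Set ℕ, a.Infinite → ∃ s ∈ S, (a ∩ s).Infinite ∧ (a \ s).Infinite}

/-- The tower number 𝔱. -/
def tNum : Cardinal :=
  sInf {c | ∃ T : Set (Set ℕ), Cardinal.mk T = c ∧ (∀ t ∈ T, t.Infinite) ∧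
    (∀ a ∈ T, ∀ b ∈ T, (a \ b).Finite ∨ (b \ a).Finite) ∧
    ¬ ∃ a : Set ℕ, a.Infinite ∧ ∀ t ∈ T, (a \ t).Finite}

/-- cov(M): the least number of meager sets covering the Baire space. -/
def covM : Cardinal :=
  sInf {c | ∃ 𝒞 : Set (Set (ℕ → ℕ)), Cardinal.mk 𝒞 = c ∧
    (∀ M ∈ 𝒞, IsMeagre M) ∧ ⋃₀ 𝒞 = Set.univ}

/-- The o-diagonalization number: the minimal cardinality of a τ-family
which is not o-diagonalizable. -/
def odNum : Cardinal :=
  sInf {c | ∃ 𝒜 : Set Arr, Cardinal.mk 𝒜 = c ∧ TauFamily 𝒜 ∧ ¬ ODiag 𝒜}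

section Covers

variable (α : Type*)

/-- A countable cover of the space `α`. -/
def CountCover (𝒰 : Set (Set α)) : Prop :=
  𝒰.Countable ∧ ⋃₀ 𝒰 = Set.univ ∧ Set.univ ∉ 𝒰

/-- A (countable) γ-cover. -/
def GammaCover (𝒰 : Set (Set α)) : Prop :=
  CountCover α 𝒰 ∧ 𝒰.Infinite ∧ ∀ x : α, {U | U ∈ 𝒰 ∧ x ∉ U}.Finite

/-- A (countable) τ-cover. -/
def TauCover (𝒰 : Set (Set α)) : Prop :=
  CountCover α 𝒰 ∧ (∀ x : α, {U | U ∈ 𝒰 ∧ x ∈ U}.Infinite) ∧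
  ∀ x y : α, {U | U ∈ 𝒰 ∧ x ∈ U ∧ y ∉ U}.Finite ∨ {U | U ∈ 𝒰 ∧ y ∈ U ∧ x ∉ U}.Finite

/-- A (countable) ω-cover. -/
def OmegaCover (𝒰 : Set (Set α)) : Prop :=
  CountCover α 𝒰 ∧ ∀ F : Set α, F.Finite → ∃ U ∈ 𝒰, F ⊆ U

variable [TopologicalSpace α]

/-- All members are open. -/
def OpenFam (𝒰 : Set (Set α)) : Prop := ∀ U ∈ 𝒰, IsOpen U

/-- All members are clopen. -/
def ClopenFam (𝒰 : Set (Set α)) : Prop := ∀ U ∈ 𝒰, IsClopen U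

/-- The class O of countable open covers. -/
def OCov (𝒰 : Set (Set α)) : Prop := CountCover α 𝒰 ∧ OpenFam α 𝒰
/-- The class Γ of countable open γ-covers. -/
def OGamma (𝒰 : Set (Set α)) : Prop := GammaCover α 𝒰 ∧ OpenFam α 𝒰
/-- The class Τ of countable open τ-covers. -/
def OTau (𝒰 : Set (Set α)) : Prop := TauCover α 𝒰 ∧ OpenFam α 𝒰
/-- The class Ω of countable open ω-covers. -/
def OOmega (𝒰 : Set (Set α)) : Prop := OmegaCover α 𝒰 ∧ OpenFam α 𝒰

/-- The class C of countable clopen covers. -/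
def KCov (𝒰 : Set (Set α)) : Prop := CountCover α 𝒰 ∧ ClopenFam α 𝒰
/-- The class C_Γ of countable clopen γ-covers. -/
def KGamma (𝒰 : Set (Set α)) : Prop := GammaCover α 𝒰 ∧ ClopenFam α 𝒰
/-- The class C_Τ of countable clopen τ-covers. -/
def KTau (𝒰 : Set (Set α)) : Prop := TauCover α 𝒰 ∧ ClopenFam α 𝒰

end Covers

/-- The selection principle S1(𝒜,ℬ). -/
def S1 (α : Type*) (𝒜 ℬ : Set (Set α) → Prop) : Prop :=
  ∀ U : ℕ → Set (Set α), (∀ n, 𝒜 (U n)) →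
    ∃ V : ℕ → Set α, (∀ n, V n ∈ U n) ∧ ℬ (range V)

/-- The selection principle Sfin(𝒜,ℬ). -/
def SFin (α : Type*) (𝒜 ℬ : Set (Set α) → Prop) : Prop :=
  ∀ U : ℕ → Set (Set α), (∀ n, 𝒜 (U n)) →
    ∃ F : ℕ → Set (Set α), (∀ n, (F n).Finite ∧ F n ⊆ U n) ∧ ℬ (⋃ n, F n)

/-- The selection principle Ufin(𝒜,ℬ). -/
def UFin (α : Type*) (𝒜 ℬ : Set (Set α) → Prop) : Prop :=
  ∀ U : ℕ → Set (Set α), (∀ n, 𝒜 (U n)) →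
    (∀ n, ¬ ∃ F : Set (Set α), F ⊆ U n ∧ F.Finite ∧ ⋃₀ F = Set.univ) →
    ∃ F : ℕ → Set (Set α), (∀ n, (F n).Finite ∧ F n ⊆ U n) ∧
      ℬ (range fun n => ⋃₀ F n)

/-- The critical cardinality non(P) of a property `P` of sets of reals:
the minimal cardinality of an infinite subset of the Cantor space not satisfying `P`. -/
def nonP (P : Set Cantor → Prop) : Cardinal :=
  sInf {c | ∃ X : Set Cantor, X.Infinite ∧ ¬ P X ∧ Cardinal.mk X = c}

/-- The collection of cardinalities of witnessing families of `f`-sequences for `θ_f`. -/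
def ThetaSet (f : ℕ → ℕ) : Set Cardinal :=
  {c | ∃ ℱ : Set (ℕ → Set ℕ), Cardinal.mk ℱ = c ∧
    (∀ σ ∈ ℱ, ∀ n, σ n ⊆ Iio (f n)) ∧
    (∀ σ ∈ ℱ, ∀ᶠ n in atTop, (σ n).Nonempty) ∧
    (∀ σ ∈ ℱ, ∀ η ∈ ℱ, (∀ᶠ n in atTop, σ n ⊆ η n) ∨ (∀ᶠ n in atTop, η n ⊆ σ n)) ∧
    ¬ ∃ g : ℕ → ℕ, ∀ σ ∈ ℱ, ∃ n, g n ∈ σ n}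

/-- The cardinal θ_f; equal to 𝔠⁺ if no witnessing family exists. -/
def theta (f : ℕ → ℕ) : Cardinal :=
  if (ThetaSet f).Nonempty then sInf (ThetaSet f) else Order.succ Cardinal.continuum

/-- θ* = min over f (with all values ≥ 2) of θ_f. -/
def thetaStar : Cardinal :=
  sInf {c | ∃ f : ℕ → ℕ, (∀ n, 2 ≤ f n) ∧ theta f = c}

/-- The collection of cardinalities of witnessing families for `𝔈_f`. -/
def ESet (f : ℕ → ℕ) : Set Cardinal :=
  {c | ∃ F : Set (ℕ → ℕ), Cardinal.mk F = c ∧ (∀ h ∈ F, ∀ n, h n < f n) ∧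
    ∀ g : ℕ → ℕ, ∃ h ∈ F, ∀ n, h n ≠ g n}

/-- The cardinal 𝔈_f; equal to 𝔠⁺ if no witnessing family exists. -/
def ENum (f : ℕ → ℕ) : Cardinal :=
  if (ESet f).Nonempty then sInf (ESet f) else Order.succ Cardinal.continuum

/-- 𝔈* = min over f (with all values ≥ 1) of 𝔈_f. -/
def EStar : Cardinal :=
  sInf {c | ∃ f : ℕ → ℕ, (∀ n, 1 ≤ f n) ∧ ENum f = c}


/-- The `k`-th power of a set. -/
def powSet (k : ℕ) {α : Type*} (U : Set α) : Set (Fin k → α) := {f | ∀ i, f i ∈ U}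

lemma powSet_inj {α : Type*} (k : ℕ) : Function.Injective (powSet (k+1) (α := α)) := by
  intro U V hUV
  ext x
  have h1 : (fun _ : Fin (k+1) => x) ∈ powSet (k+1) U ↔
      (fun _ : Fin (k+1) => x) ∈ powSet (k+1) V := by rw [hUV]
  simp only [powSet, Set.mem_setOf_eq] at h1
  constructor
  · intro hx; exact (h1.1 (fun _ => hx)) 0
  · intro hx; exact (h1.2 (fun _ => hx)) 0

lemma tau_infinite {α : Type*} {𝒰 : Set (Set α)} (h : TauCover α 𝒰) :
    ∀ F : Set α, F.Finite → F.Nonempty → {U | U ∈ 𝒰 ∧ F ⊆ U}.Infinite := by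
  intro F hF
  induction F, hF using Set.Finite.induction_on with
  | empty => intro hne; simp at hne
  | @insert x F' hxF' hF' IH =>
    intro _
    rcases F'.eq_empty_or_nonempty with rfl | hne
    · refine (h.2.1 x).mono ?_
      rintro U ⟨hU, hxU⟩
      exact ⟨hU, by simp [hxU]⟩
    · by_cases hc : ∀ y ∈ F', ({U | U ∈ 𝒰 ∧ x ∈ U ∧ y ∉ U}).Finite
      · have hfin : (⋃ y ∈ F', {U | U ∈ 𝒰 ∧ x ∈ U ∧ y ∉ U}).Finite :=
          Set.Finite.biUnion hF' hc
        refine ((h.2.1 x).diff hfin).mono ?_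
        rintro U ⟨⟨hU𝒰, hxU⟩, hUnot⟩
        refine ⟨hU𝒰, ?_⟩
        intro z hz
        rcases Set.mem_insert_iff.1 hz with rfl | hz'
        · exact hxU
        · by_contra hzU
          exact hUnot (Set.mem_biUnion hz' ⟨hU𝒰, hxU, hzU⟩)
      · push_neg at hc
        obtain ⟨y, hyF', hyinf⟩ := hc
        have hfin : {U | U ∈ 𝒰 ∧ y ∈ U ∧ x ∉ U}.Finite := by
          rcases h.2.2 x y with h1 | h1
          · exact absurd h1 hyinf
          · exact h1
        refine ((IH hne).diff hfin).mono ?_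
        rintro U ⟨⟨hU𝒰, hF'U⟩, hUnot⟩
        refine ⟨hU𝒰, ?_⟩
        intro z hz
        rcases Set.mem_insert_iff.1 hz with rfl | hz'
        · by_contra hxU
          exact hUnot ⟨hU𝒰, hF'U hyF', hxU⟩
        · exact hF'U hz'

lemma pow_OTau {α : Type*} [TopologicalSpace α] {𝒰 : Set (Set α)} (k : ℕ)
    (h : OTau α 𝒰) : OTau (Fin (k+1) → α) (powSet (k+1) '' 𝒰) := by
  have hmem : ∀ f : Fin (k+1) → α,
      {S | S ∈ powSet (k+1) '' 𝒰 ∧ f ∈ S}.Infinite := by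
    intro f
    have hr : {U | U ∈ 𝒰 ∧ Set.range f ⊆ U}.Infinite :=
      tau_infinite h.1 (Set.range f) (Set.finite_range f) (Set.range_nonempty f)
    refine (hr.image ((powSet_inj k).injOn)).mono ?_
    rintro S ⟨U, ⟨hU, hsub⟩, rfl⟩
    exact ⟨⟨U, hU, rfl⟩, fun i => hsub ⟨i, rfl⟩⟩
  refine ⟨⟨⟨h.1.1.1.image _, ?_, ?_⟩, hmem, ?_⟩, ?_⟩
  · ext f
    simp only [Set.mem_sUnion, Set.mem_univ, iff_true]
    obtain ⟨S, hS1, hS2⟩ := (hmem f).nonempty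
    exact ⟨S, hS1, hS2⟩
  · rintro ⟨U, hU, hUuniv⟩
    have hUeq : U = Set.univ := by
      ext x
      simp only [Set.mem_univ, iff_true]
      have hx : (fun _ : Fin (k+1) => x) ∈ powSet (k+1) U :=
        hUuniv.symm ▸ Set.mem_univ _
      exact hx 0
    exact h.1.1.2.2 (hUeq ▸ hU)
  · intro f g
    by_cases hc : ∀ j, ∃ i, {U | U ∈ 𝒰 ∧ f i ∈ U ∧ g j ∉ U}.Finite
    · left
      choose i hi using hc
      have hfin : (⋃ j, {U | U ∈ 𝒰 ∧ f (i j) ∈ U ∧ g j ∉ U}).Finite :=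
        Set.finite_iUnion hi
      refine (hfin.image (powSet (k+1))).subset ?_
      rintro S ⟨⟨U, hU, rfl⟩, hfS, hgS⟩
      obtain ⟨j, hj⟩ : ∃ j, g j ∉ U := by
        by_contra hh; push_neg at hh; exact hgS hh
      exact ⟨U, Set.mem_iUnion.2 ⟨j, ⟨hU, hfS (i j), hj⟩⟩, rfl⟩
    · right
      push_neg at hc
      obtain ⟨j, hj⟩ := hc
      have hfin' : ∀ i, {U | U ∈ 𝒰 ∧ g j ∈ U ∧ f i ∉ U}.Finite := by
        intro i
        rcases h.1.2.2 (f i) (g j) with h1 | h1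
        · exact absurd h1 (hj i)
        · exact h1
      have hfin : (⋃ i, {U | U ∈ 𝒰 ∧ g j ∈ U ∧ f i ∉ U}).Finite :=
        Set.finite_iUnion hfin'
      refine (hfin.image (powSet (k+1))).subset ?_
      rintro S ⟨⟨U, hU, rfl⟩, hgS, hfS⟩
      obtain ⟨i, hi⟩ : ∃ i, f i ∉ U := by
        by_contra hh; push_neg at hh; exact hfS hh
      exact ⟨U, Set.mem_iUnion.2 ⟨i, ⟨hU, hgS j, hi⟩⟩, rfl⟩
  · rintro S ⟨U, hU, rfl⟩
    have heq : powSet (k+1) U = ⋂ i : Fin (k+1), (fun f => f i) ⁻¹' U := by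
      ext f; simp [powSet]
    rw [heq]
    exact isOpen_iInter_of_finite fun i => (h.2 U hU).preimage (continuous_apply i)

/-- If all finite powers of `X` satisfy S1(Τ,O), then `X` satisfies S1(Τ,Ω). -/
theorem stmt11 (X : Set Cantor) (hX : X.Infinite)
    (h : ∀ k : ℕ, S1 (Fin k → ↥X) (OTau (Fin k → ↥X)) (OCov (Fin k → ↥X))) :
    S1 ↥X (OTau ↥X) (OOmega ↥X) := by
  intro U hU
  have key : ∀ k : ℕ, ∃ S : ℕ → Set (Fin (k+1) → ↥X),
      (∀ n, S n ∈ powSet (k+1) '' (U (Nat.pair k n))) ∧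
      OCov (Fin (k+1) → ↥X) (Set.range S) :=
    fun k => h (k+1) (fun n => powSet (k+1) '' (U (Nat.pair k n)))
      (fun n => pow_OTau k (hU (Nat.pair k n)))
  choose S hS1 hS2 using key
  have key2 : ∀ k n, ∃ W ∈ U (Nat.pair k n), powSet (k+1) W = S k n := fun k n => hS1 k n
  choose W hW1 hW2 using key2
  refine ⟨fun m => W m.unpair.1 m.unpair.2, ?_, ?_⟩
  · intro m
    have := hW1 m.unpair.1 m.unpair.2
    rwa [Nat.pair_unpair] at this
  · have homega : ∀ F : Set ↥X, F.Finite →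
        ∃ V ∈ Set.range (fun m : ℕ => W m.unpair.1 m.unpair.2), F ⊆ V := by
      intro F hF
      rcases F.eq_empty_or_nonempty with rfl | hne
      · exact ⟨W (0 : ℕ).unpair.1 (0 : ℕ).unpair.2, ⟨0, rfl⟩, by simp⟩
      · set s : Finset ↥X := hF.toFinset with hs
        have hsne : s.Nonempty := by
          rwa [hs, Set.Finite.toFinset_nonempty]
        obtain ⟨k, hk⟩ : ∃ k, s.card = k + 1 :=
          ⟨s.card - 1, (Nat.succ_pred_eq_of_pos (Finset.card_pos.2 hsne)).symm⟩
        set f : Fin (k+1) → ↥X := fun i => (s.equivFin.symm ⟨i.val, by omega⟩ : ↥X) with hfdef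
        have hcov := (hS2 k).1.2.1
        have hfmem : f ∈ ⋃₀ Set.range (S k) := by rw [hcov]; trivial
        obtain ⟨T, ⟨n, rfl⟩, hfT⟩ := hfmem
        rw [← hW2 k n] at hfT
        refine ⟨W (Nat.pair k n).unpair.1 (Nat.pair k n).unpair.2, ⟨Nat.pair k n, rfl⟩, ?_⟩
        rw [Nat.unpair_pair]
        intro x hx
        have hxs : x ∈ s := by rwa [hs, Set.Finite.mem_toFinset]
        have hlt : (s.equivFin ⟨x, hxs⟩ : ℕ) < k + 1 := by
          have := (s.equivFin ⟨x, hxs⟩).isLt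
          omega
        have hfi : f ⟨(s.equivFin ⟨x, hxs⟩ : ℕ), hlt⟩ = x := by
          rw [hfdef]
          simp only
          have : (⟨((s.equivFin ⟨x, hxs⟩ : Fin s.card) : ℕ), by omega⟩ : Fin s.card) =
              s.equivFin ⟨x, hxs⟩ := by
            apply Fin.ext; rfl
          rw [this, Equiv.symm_apply_apply]
        rw [← hfi]
        exact hfT _
    refine ⟨⟨⟨Set.countable_range _, ?_, ?_⟩, homega⟩, ?_⟩
    · ext x
      simp only [Set.mem_sUnion, Set.mem_univ, iff_true]
      obtain ⟨V, hV1, hV2⟩ := homega {x} (Set.finite_singleton x)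
      exact ⟨V, hV1, hV2 rfl⟩
    · rintro ⟨m, hm⟩
      have h1 := hW1 m.unpair.1 m.unpair.2
      rw [Nat.pair_unpair] at h1
      have h2 := (hU m).1.1.2.2
      simp only at hm
      rw [hm] at h1
      exact h2 h1
    · rintro V ⟨m, rfl⟩
      have h1 := hW1 m.unpair.1 m.unpair.2
      rw [Nat.pair_unpair] at h1
      exact (hU m).2 _ h1

end
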